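/- arXiv:1210.7908 — 2 statements merged into one kernel-verified Lean document; each statement's English description precedes it below -/
import Mathlib

section
/- Let R be a symmetrised set of reduced words satisfying the small-cancellation condition C'(λ), let r ∈ R be a relator that is not a proper power in the free group (i.e., r ≠ sᵐ for every word s and every integer m ≥ 2), let w be a nonempty reduced word, and let k ≥ 2 be an integer. If the word wᵏ (the concatenation of k copies of w, assumed reduced) is an initial segment of r, then (k−1)·|w| < λ·|r|. -/
/-- Words over the alphabet `X ∪ X⁻¹`: a letter is a pair `(x, b)`,
where `b = true` means `x` and `b = false` means `x⁻¹`. -/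
abbrev Word (X : Type) := List (X × Bool)

/-- The inverse of a letter. -/
def invLetter {X : Type} (a : X × Bool) : X × Bool := (a.1, !a.2)

/-- A word is reduced if it contains no adjacent pair of mutually inverse letters. -/
def Reduced {X : Type} (w : Word X) : Prop :=
  List.Chain' (fun a b => b ≠ invLetter a) w

/-- The formal inverse of a word: reverse the word and invert each letter. -/
def wordInv {X : Type} (w : Word X) : Word X :=
  (w.map invLetter).reverse

/-- The cyclic permutation of a word by `k` letters. -/
def cyclicPerm {X : Type} (w : Word X) (k : ℕ) : Word X :=
  w.drop k ++ w.take k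

/-- The concatenation of `n` copies of a word. -/
def wordPow {X : Type} (w : Word X) (n : ℕ) : Word X :=
  (List.replicate n w).flatten

/-- A set of words is symmetrised if it is closed under taking formal inverses
and cyclic permutations. -/
def Symmetrised {X : Type} (R : Set (Word X)) : Prop :=
  ∀ r ∈ R, wordInv r ∈ R ∧ ∀ k : ℕ, cyclicPerm r k ∈ R

/-- The `C'(λ)` small-cancellation condition (the metric piece condition): for any two
distinct relators `r₁, r₂ ∈ R`, every common initial segment `v` of `r₁` and `r₂`
has length `< λ·|r₁|`. -/
def SmallCancellation {X : Type} (R : Set (Word X)) (lam : ℝ) : Prop :=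
  ∀ r₁ ∈ R, ∀ r₂ ∈ R, r₁ ≠ r₂ →
    ∀ v : Word X, v <+: r₁ → v <+: r₂ → (v.length : ℝ) < lam * r₁.length

lemma wordPow_zero {X : Type} (w : Word X) : wordPow w 0 = [] := rfl

lemma wordPow_succ {X : Type} (w : Word X) (n : ℕ) :
    wordPow w (n+1) = w ++ wordPow w n := by
  simp [wordPow, List.replicate_succ]

lemma wordPow_one {X : Type} (w : Word X) : wordPow w 1 = w := by
  simp [wordPow]

lemma wordPow_add {X : Type} (w : Word X) (m n : ℕ) :
    wordPow w (m+n) = wordPow w m ++ wordPow w n := by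
  unfold wordPow
  rw [List.replicate_add, List.flatten_append]

lemma length_wordPow {X : Type} (w : Word X) (n : ℕ) :
    (wordPow w n).length = n * w.length := by
  simp [wordPow, Nat.mul_comm]

lemma mk_wordPow {X : Type} (w : Word X) (n : ℕ) :
    FreeGroup.mk (wordPow w n) = (FreeGroup.mk w) ^ n := by
  rw [FreeGroup.pow_mk]; rfl

/-- Lyndon–Schützenberger: commuting words are powers of a common word. -/
lemma comm_words {X : Type} : ∀ (n : ℕ) (u v : Word X), u.length + v.length ≤ n →
    u ++ v = v ++ u → ∃ t a b, u = wordPow t a ∧ v = wordPow t b := by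
  intro n
  induction n with
  | zero =>
    intro u v hlen _
    have hu : u = [] := List.length_eq_zero_iff.mp (by omega)
    have hv : v = [] := List.length_eq_zero_iff.mp (by omega)
    exact ⟨[], 0, 0, by simp [hu, wordPow_zero], by simp [hv, wordPow_zero]⟩
  | succ n ih =>
    intro u v hlen h
    rcases eq_or_ne u [] with rfl | hu
    · exact ⟨v, 0, 1, rfl, (wordPow_one v).symm⟩
    rcases eq_or_ne v [] with rfl | hv
    · exact ⟨u, 1, 0, (wordPow_one u).symm, rfl⟩
    have hul : 1 ≤ u.length := List.length_pos_iff.mpr hu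
    have hvl : 1 ≤ v.length := List.length_pos_iff.mpr hv
    rcases le_total u.length v.length with hle | hle
    · have h1 : u <+: v ++ u := h ▸ List.prefix_append u v
      have h2 : u <+: v := by
        have he : u = (v ++ u).take u.length := List.prefix_iff_eq_take.mp h1
        rw [List.take_append_of_le_length hle] at he
        exact he ▸ List.take_prefix _ _
      obtain ⟨v', rfl⟩ := h2
      have h' : u ++ v' = v' ++ u :=
        List.append_cancel_left (as := u)
          (by rw [h, List.append_assoc])
      have hlen' : u.length + v'.length ≤ n := by
        simp [List.length_append] at hlen; omega
      obtain ⟨t, a, b, h1', h2'⟩ := ih u v' hlen' h'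
      exact ⟨t, a, a + b, h1', by rw [wordPow_add, ← h1', ← h2']⟩
    · have h1 : v <+: u ++ v := h.symm ▸ List.prefix_append v u
      have h2 : v <+: u := by
        have he : v = (u ++ v).take v.length := List.prefix_iff_eq_take.mp h1
        rw [List.take_append_of_le_length hle] at he
        exact he ▸ List.take_prefix _ _
      obtain ⟨u', rfl⟩ := h2
      have h' : u' ++ v = v ++ u' :=
        List.append_cancel_left (as := v)
          (by rw [← List.append_assoc, h])
      have hlen' : u'.length + v.length ≤ n := by
        simp [List.length_append] at hlen; omega
      obtain ⟨t, a, b, h1', h2'⟩ := ih u' v hlen' h'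
      exact ⟨t, b + a, b, by rw [wordPow_add, ← h1', ← h2'], h2'⟩
/-- If `R` is a symmetrised set of reduced words satisfying `C'(λ)`, `r ∈ R` is not a proper
power in the free group, `w` is a nonempty reduced word, `k ≥ 2`, and `wᵏ` (assumed reduced)
is an initial segment of `r`, then `(k−1)·|w| < λ·|r|`. -/

theorem power_prefix_of_relator {X : Type} (R : Set (Word X)) (lam : ℝ)
    (hR : ∀ r ∈ R, Reduced r)
    (hsym : Symmetrised R)
    (hsc : SmallCancellation R lam)
    (r : Word X) (hr : r ∈ R)
    (hnp : ∀ (s : Word X) (m : ℕ), 2 ≤ m → FreeGroup.mk r ≠ (FreeGroup.mk s) ^ m)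
    (w : Word X) (hw : Reduced w) (hwne : w ≠ [])
    (k : ℕ) (hk : 2 ≤ k)
    (hpowred : Reduced (wordPow w k))
    (hpref : wordPow w k <+: r) :
    (((k - 1 : ℕ) * w.length : ℕ) : ℝ) < lam * r.length := by
  set n := w.length with hn
  have hwl : 1 ≤ n := by
    cases w with
    | nil => exact absurd rfl hwne
    | cons a l => simp [hn]
  -- decompose r
  obtain ⟨tail, htail⟩ := hpref
  have hksub : k - 1 + 1 = k := by omega
  have hsplit : wordPow w k = w ++ wordPow w (k-1) := by
    rw [← wordPow_succ, hksub]
  have hr_eq : r = w ++ (wordPow w (k-1) ++ tail) := by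
    rw [← htail, hsplit, List.append_assoc]
  have hlenr : k * n ≤ r.length := by
    rw [hn, ← htail, List.length_append, length_wordPow]
    omega
  have hnlt : n < r.length := by nlinarith
  -- the cyclic permutation
  have hdrop : r.drop n = wordPow w (k-1) ++ tail := by
    rw [hr_eq, hn, List.drop_left]
  have htake : r.take n = w := by
    rw [hr_eq, hn, List.take_left]
  have hpref2 : wordPow w (k-1) <+: cyclicPerm r n := by
    unfold cyclicPerm
    rw [hdrop, List.append_assoc]
    exact List.prefix_append _ _
  have hsplit2 : wordPow w k = wordPow w (k-1) ++ w := by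
    conv_lhs => rw [← hksub]
    rw [wordPow_add, wordPow_one]
  have hpref1 : wordPow w (k-1) <+: r :=
    List.IsPrefix.trans ⟨w, hsplit2.symm⟩ ⟨tail, htail⟩
  -- cyclic permutation is a different relator
  have hne : r ≠ cyclicPerm r n := by
    intro heq
    have hcomm : r.take n ++ r.drop n = r.drop n ++ r.take n := by
      rw [List.take_append_drop]
      exact heq
    obtain ⟨t, a, b, h1, h2⟩ :=
      comm_words ((r.take n).length + (r.drop n).length) (r.take n) (r.drop n) le_rfl hcomm
    have hta : r.take n ≠ [] := by
      rw [htake]; exact hwne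
    have htb : r.drop n ≠ [] := by
      intro hnil
      have hld : (r.drop n).length = r.length - n := List.length_drop
      rw [hnil] at hld
      simp at hld
      omega
    have ha : 1 ≤ a := by
      rcases Nat.eq_zero_or_pos a with rfl | h
      · exact absurd h1 hta
      · exact h
    have hb : 1 ≤ b := by
      rcases Nat.eq_zero_or_pos b with rfl | h
      · exact absurd h2 htb
      · exact h
    have hrpow : r = wordPow t (a + b) := by
      rw [wordPow_add, ← h1, ← h2, List.take_append_drop]
    exact hnp t (a + b) (by omega) (by rw [hrpow, mk_wordPow])
  have hmem : cyclicPerm r n ∈ R := (hsym r hr).2 n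
  have := hsc r hr (cyclicPerm r n) hmem hne (wordPow w (k-1)) hpref1 hpref2
  rw [length_wordPow] at this
  exact_mod_cast this
end

section
/- There do not exist reduced words x, y, z and a nonempty reduced word w over the alphabet X ∪ X⁻¹ such that the concatenation x·y·z·x⁻¹·y⁻¹·z⁻¹ is a reduced word (no cancellation occurs at any of the six junctions) and is equal letter-for-letter (graphically) to the concatenation w·w·w. -/
private lemma wordInv_length' {X : Type} (l : Word X) : (wordInv l).length = l.length := by
  simp [wordInv]

private lemma getD_wordInv {X : Type} (l : Word X) (d : X × Bool) {j : ℕ} (h : j < l.length) :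
    (wordInv l).getD j d = invLetter (l.getD (l.length - 1 - j) d) := by
  have h1 : j < (wordInv l).length := by rw [wordInv_length']; exact h
  have h2 : l.length - 1 - j < l.length := by omega
  rw [List.getD_eq_getElem _ _ h1, List.getD_eq_getElem _ _ h2]
  simp only [wordInv, List.getElem_reverse, List.length_map, List.getElem_map]

private def cyc {X : Type} (w : Word X) (d : X × Bool) : ℕ → X × Bool :=
  fun i => w.getD (i % w.length) d

private lemma cyc_per {X : Type} (w : Word X) (d : X × Bool) {i j : ℕ}
    (h : i % w.length = j % w.length) : cyc w d i = cyc w d j := by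
  simp only [cyc, h]

private lemma pole {X : Type} (u : ℕ → X × Bool) (n m p q ℓ : ℕ)
    (hn : n = 2 * m) (hm : 0 < m)
    (hper : ∀ i j : ℕ, i % n = j % n → u i = u j)
    (hred : ∀ i : ℕ, u (i + 1) ≠ invLetter (u i))
    (hq : ℓ ≤ q + 1)
    (hrel : ∀ j, j < ℓ → u (p + j) = invLetter (u (q - j))) : ℓ < m := by
  by_contra hc
  push_neg at hc
  have hn0 : 0 < n := by omega
  have hple : p ≤ q + p * n := by
    have := Nat.le_mul_of_pos_right p hn0
    omega
  set t := q + p * n - p with ht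
  set r := t % n with hr
  have hrlt : r < n := Nat.mod_lt _ hn0
  have hbase : q ≡ r + p [MOD n] := by
    have h1 : q + p * n ≡ q + 0 [MOD n] :=
      Nat.ModEq.add_left q ((Nat.modEq_zero_iff_dvd).2 ⟨p, by ring⟩)
    have h3 : t + p = q + p * n := by omega
    calc q = q + 0 := by ring
      _ ≡ q + p * n [MOD n] := h1.symm
      _ = t + p := h3.symm
      _ ≡ r + p [MOD n] := (Nat.mod_modEq t n).symm.add_right p
  rcases Nat.even_or_odd r with he | ho
  · obtain ⟨j, hj⟩ := he
    have hjl : j < ℓ := by omega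
    have hcong : (p + j) + j ≡ (q - j) + j [MOD n] := by
      have e2 : (q - j) + j = q := by omega
      have e1 : r + p = (p + j) + j := by omega
      have h4 := hbase.symm
      rw [e1] at h4
      rw [e2]
      exact h4
    have hpq := Nat.ModEq.add_right_cancel' j hcong
    have h5 := hper _ _ hpq
    have h6 := hrel j hjl
    rw [h5] at h6
    have h7 := congrArg Prod.snd h6
    simp [invLetter] at h7
  · obtain ⟨j2, hj2⟩ := ho
    rcases Nat.lt_or_ge (r + 1) n with hlt | hge
    · have hjl : j2 + 1 < ℓ := by omega
      have hcong : (p + (j2+1)) + (j2+1) ≡ ((q - (j2+1)) + 1) + (j2+1) [MOD n] := by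
        have e2 : ((q - (j2+1)) + 1) + (j2+1) = q + 1 := by omega
        have e1 : r + p + 1 = (p + (j2+1)) + (j2+1) := by omega
        have h4 := (hbase.add_right 1).symm
        rw [e1] at h4
        rw [e2]
        exact h4
      have hpq := Nat.ModEq.add_right_cancel' (j2+1) hcong
      have h5 := hper _ _ hpq
      have h6 := hrel (j2+1) hjl
      rw [h5] at h6
      exact hred (q - (j2+1)) h6
    · have h1 : q + 1 ≡ n + p [MOD n] := by
        have h4 := hbase.add_right 1
        have e : r + p + 1 = n + p := by omega
        rwa [e] at h4
      have h2 : n + p ≡ p [MOD n] := Nat.add_mod_left n p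
      have hpq : p ≡ q + 1 [MOD n] := (h1.trans h2).symm
      have h5 := hper _ _ hpq
      have h6 := hrel 0 (by omega)
      simp only [Nat.add_zero, Nat.sub_zero] at h6
      rw [h5] at h6
      exact hred q h6

/-- There do not exist reduced words `x, y, z` and a nonempty reduced word `w` such that
the concatenation `x·y·z·x⁻¹·y⁻¹·z⁻¹` is reduced (no cancellation at any junction) and is
graphically equal to `w·w·w`. -/
theorem no_wicks_cube (X : Type) :
    ¬ ∃ (x y z w : Word X), Reduced x ∧ Reduced y ∧ Reduced z ∧
        Reduced w ∧ w ≠ [] ∧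
        Reduced (x ++ y ++ z ++ wordInv x ++ wordInv y ++ wordInv z) ∧
        x ++ y ++ z ++ wordInv x ++ wordInv y ++ wordInv z = w ++ w ++ w := by
  rintro ⟨x, y, z, w, -, -, -, -, hwne, hred, heq⟩
  have d : X × Bool := w.head hwne
  have hn0 : 0 < w.length := List.length_pos_iff.2 hwne
  have hL := congrArg List.length heq
  simp only [List.length_append, wordInv_length'] at hL
  obtain ⟨m, hm2⟩ : ∃ m, w.length = 2 * m := ⟨w.length / 2, by omega⟩
  have hmpos : 0 < m := by omega
  have hs : x.length + y.length + z.length = 3 * m := by omega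
  -- u
  have hper : ∀ i j : ℕ, i % w.length = j % w.length → cyc w d i = cyc w d j :=
    fun i j h => cyc_per w d h
  have hu3 : ∀ i, i < 3 * w.length → (w ++ w ++ w).getD i d = cyc w d i := by
    intro i hi
    show _ = w.getD (i % w.length) d
    rcases Nat.lt_or_ge i w.length with h | h
    · rw [List.getD_append _ _ _ _ (show i < (w ++ w).length by simp; omega),
        List.getD_append _ _ _ _ h, Nat.mod_eq_of_lt h]
    · rcases Nat.lt_or_ge i (2 * w.length) with h2 | h2
      · rw [List.getD_append _ _ _ _ (show i < (w ++ w).length by simp; omega),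
          List.getD_append_right _ _ _ _ h, Nat.mod_eq_sub_mod h,
          Nat.mod_eq_of_lt (by omega)]
      · rw [List.getD_append_right _ _ _ _ (show (w ++ w).length ≤ i by simp; omega)]
        have e : i - (w ++ w).length = i % w.length := by
          rw [Nat.mod_eq_sub_mod h, Nat.mod_eq_sub_mod (by omega : w.length ≤ i - w.length),
            Nat.mod_eq_of_lt (by omega)]
          simp only [List.length_append]
          omega
        rw [e]
  have hl3 : (w ++ w ++ w).length = 3 * w.length := by simp; ring
  have hred3 : Reduced (w ++ w ++ w) := heq ▸ hred
  have hchain : ∀ i, i + 1 < 3 * w.length →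
      (w ++ w ++ w).getD (i+1) d ≠ invLetter ((w ++ w ++ w).getD i d) := by
    rw [Reduced, List.Chain', List.isChain_iff_getElem] at hred3
    intro i hi h
    have h1 : i < (w ++ w ++ w).length - 1 := by omega
    have h2 := hred3 i (by omega)
    rw [List.getD_eq_getElem _ _ (by omega : i + 1 < (w ++ w ++ w).length),
      List.getD_eq_getElem _ _ (by omega : i < (w ++ w ++ w).length)] at h
    exact h2 h
  have hcyc : ∀ i, cyc w d (i+1) ≠ invLetter (cyc w d i) := by
    intro i
    have hin : i % w.length < w.length := Nat.mod_lt _ hn0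
    have e1 : cyc w d i = cyc w d (i % w.length) :=
      hper _ _ (Nat.mod_mod_of_dvd i dvd_rfl).symm
    have e2 : cyc w d (i+1) = cyc w d (i % w.length + 1) :=
      hper _ _ (Nat.mod_add_mod i w.length 1).symm
    rw [e1, e2, ← hu3 _ (by omega), ← hu3 _ (by omega)]
    exact hchain _ (by omega)
  -- blocks
  have hb1 : ∀ i, i < x.length →
      (x ++ y ++ z ++ wordInv x ++ wordInv y ++ wordInv z).getD i d = x.getD i d := by
    intro i hi
    rw [List.getD_append _ _ _ _ (by simp [wordInv_length']; omega),
      List.getD_append _ _ _ _ (by simp [wordInv_length']; omega),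
      List.getD_append _ _ _ _ (by simp; omega),
      List.getD_append _ _ _ _ (by simp; omega),
      List.getD_append _ _ _ _ hi]
  have hb2 : ∀ i, x.length ≤ i → i - x.length < y.length →
      (x ++ y ++ z ++ wordInv x ++ wordInv y ++ wordInv z).getD i d
        = y.getD (i - x.length) d := by
    intro i h1 h2
    rw [List.getD_append _ _ _ _ (by simp [wordInv_length']; omega),
      List.getD_append _ _ _ _ (by simp [wordInv_length']; omega),
      List.getD_append _ _ _ _ (by simp; omega),
      List.getD_append _ _ _ _ (by simp; omega),
      List.getD_append_right _ _ _ _ h1]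
  have hb3 : ∀ i, x.length ≤ i → y.length ≤ i - x.length →
      i - x.length - y.length < z.length →
      (x ++ y ++ z ++ wordInv x ++ wordInv y ++ wordInv z).getD i d
        = z.getD (i - x.length - y.length) d := by
    intro i h1 h2 h3
    rw [List.getD_append _ _ _ _ (by simp [wordInv_length']; omega),
      List.getD_append _ _ _ _ (by simp [wordInv_length']; omega),
      List.getD_append _ _ _ _ (by simp; omega),
      List.getD_append_right _ _ _ _ (by simp; omega : (x ++ y).length ≤ i)]
    congr 1
    simp only [List.length_append]
    omega
  have hb4 : ∀ j, j < x.length →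
      (x ++ y ++ z ++ wordInv x ++ wordInv y ++ wordInv z).getD
        (x.length + y.length + z.length + j) d = (wordInv x).getD j d := by
    intro j hj
    rw [List.getD_append _ _ _ _ (by simp [wordInv_length']; omega),
      List.getD_append _ _ _ _ (by simp [wordInv_length']; omega),
      List.getD_append_right _ _ _ _ (by simp; omega : ((x ++ y) ++ z).length ≤ _)]
    congr 1
    simp only [List.length_append]
    omega
  have hb5 : ∀ j, j < y.length →
      (x ++ y ++ z ++ wordInv x ++ wordInv y ++ wordInv z).getD
        (x.length + y.length + z.length + x.length + j) d = (wordInv y).getD j d := by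
    intro j hj
    rw [List.getD_append _ _ _ _ (by simp [wordInv_length']; omega),
      List.getD_append_right _ _ _ _
        (by simp [wordInv_length']; omega : (((x ++ y) ++ z) ++ wordInv x).length ≤ _)]
    congr 1
    simp only [List.length_append, wordInv_length']
    omega
  have hb6 : ∀ j, j < z.length →
      (x ++ y ++ z ++ wordInv x ++ wordInv y ++ wordInv z).getD
        (x.length + y.length + z.length + x.length + y.length + j) d
        = (wordInv z).getD j d := by
    intro j hj
    rw [List.getD_append_right _ _ _ _
      (by simp [wordInv_length']; omega :
        ((((x ++ y) ++ z) ++ wordInv x) ++ wordInv y).length ≤ _)]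
    congr 1
    simp only [List.length_append, wordInv_length']
    omega
  -- relations
  have rel1 : ∀ j, j < x.length →
      cyc w d (x.length + y.length + z.length + j)
        = invLetter (cyc w d (x.length - 1 - j)) := by
    intro j hj
    have e1 : cyc w d (x.length + y.length + z.length + j) = (wordInv x).getD j d := by
      rw [← hu3 _ (by omega), ← heq]
      exact hb4 j hj
    have e2 : cyc w d (x.length - 1 - j) = x.getD (x.length - 1 - j) d := by
      rw [← hu3 _ (by omega), ← heq]
      exact hb1 _ (by omega)
    rw [e1, e2, getD_wordInv x d hj]
  have rel2 : ∀ j, j < y.length →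
      cyc w d (x.length + y.length + z.length + x.length + j)
        = invLetter (cyc w d (x.length + y.length - 1 - j)) := by
    intro j hj
    have e1 : cyc w d (x.length + y.length + z.length + x.length + j)
        = (wordInv y).getD j d := by
      rw [← hu3 _ (by omega), ← heq]
      exact hb5 j hj
    have e2 : cyc w d (x.length + y.length - 1 - j)
        = y.getD (x.length + y.length - 1 - j - x.length) d := by
      rw [← hu3 _ (by omega), ← heq]
      exact hb2 _ (by omega) (by omega)
    have e3 : x.length + y.length - 1 - j - x.length = y.length - 1 - j := by omega
    rw [e1, e2, e3, getD_wordInv y d hj]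
  have rel3 : ∀ j, j < z.length →
      cyc w d (x.length + y.length + z.length + x.length + y.length + j)
        = invLetter (cyc w d (x.length + y.length + z.length - 1 - j)) := by
    intro j hj
    have e1 : cyc w d (x.length + y.length + z.length + x.length + y.length + j)
        = (wordInv z).getD j d := by
      rw [← hu3 _ (by omega), ← heq]
      exact hb6 j hj
    have e2 : cyc w d (x.length + y.length + z.length - 1 - j)
        = z.getD (x.length + y.length + z.length - 1 - j - x.length - y.length) d := by
      rw [← hu3 _ (by omega), ← heq]
      exact hb3 _ (by omega) (by omega) (by omega)
    have e3 : x.length + y.length + z.length - 1 - j - x.length - y.length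
        = z.length - 1 - j := by omega
    rw [e1, e2, e3, getD_wordInv z d hj]
  have p1 : x.length < m :=
    pole (cyc w d) w.length m (x.length + y.length + z.length) (x.length - 1) x.length
      hm2 hmpos hper hcyc (by omega) rel1
  have p2 : y.length < m :=
    pole (cyc w d) w.length m (x.length + y.length + z.length + x.length)
      (x.length + y.length - 1) y.length hm2 hmpos hper hcyc (by omega) rel2
  have p3 : z.length < m :=
    pole (cyc w d) w.length m (x.length + y.length + z.length + x.length + y.length)
      (x.length + y.length + z.length - 1) z.length hm2 hmpos hper hcyc (by omega) rel3
  omega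
end
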